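/- arXiv:1812.08692 — 8 statements merged into one kernel-verified Lean document; each statement's English description precedes it below -/
import Mathlib

section
/- Let Q be a division ring with valuation v, valuation ring R ⊂ Q, and residue division ring L = R/m where m = {x : v(x) > 0}. Let V ⊆ Qⁿ be a right Q-subspace, and let v₁, …, v_r ∈ V ∩ Rⁿ be elements whose images in Lⁿ form a basis of the L-subspace obtained as the image of V ∩ Rⁿ in Lⁿ. Then v₁, …, v_r form a basis of V as a right Q-vector space; in particular dim_Q V = dim_L (image of V ∩ Rⁿ in Lⁿ). -/
open MulOpposite Finset

section Aux

variable {Q : Type*} [DivisionRing Q] {L : Type*} [DivisionRing L]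

lemma aux_vsum (v : Q → WithTop ℤ)
    (hadd : ∀ a b : Q, min (v a) (v b) ≤ v (a + b))
    (htop : ∀ x : Q, v x = ⊤ ↔ x = 0)
    {ι : Type*} (s : Finset ι) (f : ι → Q) (B : WithTop ℤ)
    (h : ∀ k ∈ s, B ≤ v (f k)) : B ≤ v (∑ k ∈ s, f k) := by
  induction s using Finset.cons_induction with
  | empty => simp [(htop 0).2 rfl]
  | cons a s ha ih =>
      rw [Finset.sum_cons]
      exact le_trans (le_min (h a (Finset.mem_cons_self a s))
        (ih fun k hk => h k (Finset.mem_cons_of_mem hk))) (hadd _ _)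

lemma aux_rhosum (v : Q → WithTop ℤ)
    (hadd : ∀ a b : Q, min (v a) (v b) ≤ v (a + b))
    (htop : ∀ x : Q, v x = ⊤ ↔ x = 0)
    (ρ : Q → L)
    (hρadd : ∀ x y : Q, 0 ≤ v x → 0 ≤ v y → ρ (x + y) = ρ x + ρ y)
    (hρ0 : ρ 0 = 0)
    {ι : Type*} (s : Finset ι) (f : ι → Q) (h : ∀ k ∈ s, 0 ≤ v (f k)) :
    ρ (∑ k ∈ s, f k) = ∑ k ∈ s, ρ (f k) := by
  induction s using Finset.cons_induction with
  | empty => simpa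
  | cons a s ha ih =>
      rw [Finset.sum_cons, Finset.sum_cons,
        hρadd _ _ (h a (Finset.mem_cons_self a s))
          (aux_vsum v hadd htop s f 0 fun k hk => h k (Finset.mem_cons_of_mem hk)),
        ih fun k hk => h k (Finset.mem_cons_of_mem hk)]

end Aux

/-- Lifting a basis of the residue reduction of `V ∩ Rⁿ` to a basis of a right `Q`-subspace
`V ⊆ Qⁿ`. Here `Q` is a division ring with a surjective discrete valuation `v`,
`R = {x | 0 ≤ v x}` is the valuation ring, and the residue division ring `L = R/m` is
encoded by the reduction map `ρ : Q → L` (a ring homomorphism on `R` with kernel `m`,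
surjective onto `L`). Right vector spaces are modules over the opposite ring. -/
theorem stmt_3 {Q : Type*} [DivisionRing Q] {L : Type*} [DivisionRing L]
    (v : Q → WithTop ℤ)
    (hmul : ∀ a b : Q, v (a * b) = v a + v b)
    (hadd : ∀ a b : Q, min (v a) (v b) ≤ v (a + b))
    (htop : ∀ x : Q, v x = ⊤ ↔ x = 0)
    (hsurjv : ∀ m : ℤ, ∃ x : Q, v x = (m : WithTop ℤ))
    (ρ : Q → L)
    (hρ1 : ρ 1 = 1)
    (hρadd : ∀ x y : Q, 0 ≤ v x → 0 ≤ v y → ρ (x + y) = ρ x + ρ y)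
    (hρmul : ∀ x y : Q, 0 ≤ v x → 0 ≤ v y → ρ (x * y) = ρ x * ρ y)
    (hρker : ∀ x : Q, 0 ≤ v x → (ρ x = 0 ↔ 0 < v x))
    (hρsurj : ∀ l : L, ∃ x : Q, 0 ≤ v x ∧ ρ x = l)
    {n r : ℕ} (V : Submodule Qᵐᵒᵖ (Fin n → Q))
    (w : Fin r → (Fin n → Q))
    (hwV : ∀ k, w k ∈ V) (hwR : ∀ k i, 0 ≤ v (w k i))
    -- the reductions of `w` form a basis of the image of `V ∩ Rⁿ` in `Lⁿ`:
    (hind : LinearIndependent Lᵐᵒᵖ (fun k : Fin r => fun i => ρ (w k i)))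
    (hspan : Submodule.span Lᵐᵒᵖ (Set.range (fun k : Fin r => fun i => ρ (w k i)))
      = Submodule.span Lᵐᵒᵖ
          {y : Fin n → L | ∃ x ∈ V, (∀ i, 0 ≤ v (x i)) ∧ y = fun i => ρ (x i)}) :
    LinearIndependent Qᵐᵒᵖ w ∧ Submodule.span Qᵐᵒᵖ (Set.range w) = V ∧
      Module.finrank Qᵐᵒᵖ V = r := by
  -- basic valuation facts
  have hv0 : v 0 = ⊤ := (htop 0).2 rfl
  have hvtop : ∀ a : Q, a ≠ 0 → v a ≠ ⊤ := fun a h ht => h ((htop a).1 ht)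
  have hfin : ∀ a : Q, a ≠ 0 → ∃ c : ℤ, v a = (c : WithTop ℤ) := by
    intro a ha
    obtain ⟨c, hc⟩ := WithTop.ne_top_iff_exists.1 (hvtop a ha)
    exact ⟨c, hc.symm⟩
  have hv1 : v 1 = 0 := by
    have h := hmul 1 1
    rw [one_mul] at h
    obtain ⟨c, hc⟩ := hfin 1 one_ne_zero
    rw [hc, ← WithTop.coe_add] at h
    have hcc : c = c + c := WithTop.coe_inj.1 h
    have : c = 0 := by omega
    rw [hc, this]
    norm_num
  have hvinv : ∀ a : Q, a ≠ 0 → v a + v a⁻¹ = 0 := by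
    intro a ha
    rw [← hmul, mul_inv_cancel₀ ha, hv1]
  have hvneg : ∀ a : Q, v (-a) = v a := by
    have hm1 : v (-1 : Q) = 0 := by
      have h := hmul (-1 : Q) (-1)
      rw [neg_mul_neg, one_mul, hv1] at h
      obtain ⟨c, hc⟩ := hfin (-1 : Q) (by norm_num)
      rw [hc, ← WithTop.coe_add] at h
      have hcc : (0 : ℤ) = c + c := by exact_mod_cast h
      have hc0 : c = 0 := by omega
      rw [hc, hc0]
      norm_num
    intro a
    have : -a = a * (-1) := (mul_neg_one a).symm
    rw [this, hmul, hm1, add_zero]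
  have hρ0 : ρ 0 = 0 := by
    refine (hρker 0 (by rw [hv0]; exact le_top)).2 ?_
    rw [hv0]; exact lt_of_le_of_ne le_top (by simp)
  -- Part 1: linear independence
  have hind1 : LinearIndependent Qᵐᵒᵖ w := by
    rw [Fintype.linearIndependent_iff]
    intro g hg
    by_contra hne
    push_neg at hne
    obtain ⟨k₁, hk₁⟩ := hne
    obtain ⟨k₀, -, hk₀⟩ := Finset.exists_min_image Finset.univ
      (fun k => v ((g k).unop)) ⟨k₁, Finset.mem_univ _⟩
    set c : Fin r → Q := fun k => (g k).unop with hc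
    have hck1 : c k₁ ≠ 0 := fun h => hk₁ (by simpa [hc, MulOpposite.unop_eq_zero_iff] using h)
    have hck0 : c k₀ ≠ 0 := by
      intro h0
      have h := hk₀ k₁ (Finset.mem_univ _)
      rw [show v ((g k₀).unop) = ⊤ from by rw [show (g k₀).unop = c k₀ from rfl, h0, hv0]] at h
      exact hvtop _ hck1 (top_le_iff.1 h)
    set d : Fin r → Q := fun k => c k * (c k₀)⁻¹ with hd
    have hdv : ∀ k, 0 ≤ v (d k) := by
      intro k
      rw [hd]
      show (0 : WithTop ℤ) ≤ v (c k * (c k₀)⁻¹)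
      rw [hmul]
      calc (0 : WithTop ℤ) = v (c k₀) + v (c k₀)⁻¹ := (hvinv _ hck0).symm
        _ ≤ v (c k) + v (c k₀)⁻¹ := add_le_add_left (hk₀ k (Finset.mem_univ k)) _
    have hrel : ∀ i, ∑ k, w k i * c k = 0 := by
      intro i
      have h := congrFun hg i
      simpa [Finset.sum_apply, MulOpposite.smul_eq_mul_unop] using h
    have hrel2 : ∀ i, ∑ k, ρ (w k i) * ρ (d k) = 0 := by
      intro i
      have h2 : (∑ k, w k i * d k) = 0 := by
        have : (∑ k, w k i * d k) = (∑ k, w k i * c k) * (c k₀)⁻¹ := by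
          rw [Finset.sum_mul]
          exact Finset.sum_congr rfl fun k _ => (mul_assoc _ _ _).symm
        rw [this, hrel i, zero_mul]
      calc ∑ k, ρ (w k i) * ρ (d k) = ∑ k, ρ (w k i * d k) :=
            Finset.sum_congr rfl fun k _ => (hρmul _ _ (hwR k i) (hdv k)).symm
        _ = ρ (∑ k, w k i * d k) := (aux_rhosum v hadd htop ρ hρadd hρ0 _ _
              (fun k _ => by rw [hmul]; exact add_nonneg (hwR k i) (hdv k))).symm
        _ = 0 := by rw [h2, hρ0]
    have h := Fintype.linearIndependent_iff.mp hind (fun k => op (ρ (d k))) ?_ k₀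
    · apply one_ne_zero (α := L)
      have hd1 : d k₀ = 1 := mul_inv_cancel₀ hck0
      have : ρ (d k₀) = 0 := by simpa using congrArg unop h
      rw [hd1, hρ1] at this
      exact this
    · funext i
      simpa [Finset.sum_apply, MulOpposite.smul_eq_mul_unop] using hrel2 i
  -- Part 2: spanning
  have hspaneq : Submodule.span Qᵐᵒᵖ (Set.range w) = V := by
    refine le_antisymm (Submodule.span_le.2 (Set.range_subset_iff.2 hwV)) ?_
    intro x hxV
    by_contra hxW
    have hx0 : x ≠ 0 := fun h => hxW (h ▸ Submodule.zero_mem _)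
    have hxi : ∃ i, x i ≠ 0 := by
      by_contra h; push_neg at h; exact hx0 (funext h)
    obtain ⟨i₁, hi₁⟩ := hxi
    obtain ⟨i₀, -, hi₀⟩ := Finset.exists_min_image Finset.univ
      (fun i => v (x i)) ⟨i₁, Finset.mem_univ _⟩
    have hxi₀ : v (x i₀) ≠ ⊤ := by
      intro h
      exact hvtop _ hi₁ (top_le_iff.1 (h ▸ hi₀ i₁ (Finset.mem_univ _)))
    obtain ⟨m, hm⟩ : ∃ m : ℤ, v (x i₀) = (m : WithTop ℤ) := by
      rcases hc : v (x i₀) with _ | c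
      · exact absurd hc hxi₀
      · exact ⟨c, rfl⟩
    obtain ⟨s, hsv⟩ := hsurjv (-m)
    have hs0 : s ≠ 0 := by
      intro h; rw [h, hv0] at hsv; exact absurd hsv.symm (by simp)
    set x' : Fin n → Q := (op s) • x with hx'def
    have hx'V : x' ∈ V := Submodule.smul_mem V _ hxV
    have hx'R : ∀ i, 0 ≤ v (x' i) := by
      intro i
      show 0 ≤ v (x i * s)
      rw [hmul, hsv]
      calc (0 : WithTop ℤ) = ((m : ℤ) : WithTop ℤ) + ((-m : ℤ) : WithTop ℤ) := by
            rw [← WithTop.coe_add]; norm_num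
        _ ≤ v (x i) + ((-m : ℤ) : WithTop ℤ) :=
            add_le_add_left (hm ▸ hi₀ i (Finset.mem_univ i)) _
    have hx'W : x' ∉ Submodule.span Qᵐᵒᵖ (Set.range w) := by
      intro hmem
      apply hxW
      have hx : x = (op s⁻¹) • x' := by
        funext i
        show x i = x i * s * s⁻¹
        rw [mul_assoc, mul_inv_cancel₀ hs0, mul_one]
      rw [hx]
      exact Submodule.smul_mem _ _ hmem
    -- the dual functional
    have hins : LinearIndepOn Qᵐᵒᵖ id (insert x' (Set.range w)) :=
      LinearIndepOn.insert hind1.linearIndepOn_id (by rwa [Set.image_id])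
    set B := Module.Basis.extend hins with hB
    have hx'mem : x' ∈ hins.extend (Set.subset_univ _) :=
      hins.subset_extend _ (Set.mem_insert _ _)
    set j₀ : hins.extend (Set.subset_univ _) := ⟨x', hx'mem⟩ with hj₀
    set G : (Fin n → Q) →ₗ[Qᵐᵒᵖ] Qᵐᵒᵖ := B.coord j₀ with hG
    have hGx' : G x' = 1 := by
      have hbx : B j₀ = x' := Module.Basis.extend_apply_self hins j₀
      have h0 : G (B j₀) = 1 := by
        rw [hG, Module.Basis.coord_apply, Module.Basis.repr_self, Finsupp.single_eq_same]
      rwa [hbx] at h0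
    have hGw : ∀ k, G (w k) = 0 := by
      intro k
      have hmemk : w k ∈ hins.extend (Set.subset_univ _) :=
        hins.subset_extend _ (Set.mem_insert_of_mem _ ⟨k, rfl⟩)
      have hb : B ⟨w k, hmemk⟩ = w k := Module.Basis.extend_apply_self hins _
      have hne : (⟨w k, hmemk⟩ : hins.extend (Set.subset_univ _)) ≠ j₀ := by
        intro h
        apply hx'W
        have hxx : w k = x' := congrArg Subtype.val h
        rw [← hxx]
        exact Submodule.subset_span ⟨k, rfl⟩
      have h0 : G (B ⟨w k, hmemk⟩) = 0 := by
        rw [hG, Module.Basis.coord_apply, Module.Basis.repr_self, Finsupp.single_eq_of_ne' hne]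
      rwa [hb] at h0
    have hGW : ∀ z ∈ Submodule.span Qᵐᵒᵖ (Set.range w), G z = 0 := by
      intro z hz
      have : Submodule.span Qᵐᵒᵖ (Set.range w) ≤ LinearMap.ker G :=
        Submodule.span_le.2 (Set.range_subset_iff.2 fun k => LinearMap.mem_ker.2 (hGw k))
      exact LinearMap.mem_ker.1 (this hz)
    set a : Fin n → Q := fun i => (G (Pi.single i (1 : Q))).unop with ha
    have hFy : ∀ y : Fin n → Q, (G y).unop = ∑ i, a i * y i := by
      intro y
      have hyrep : y = ∑ i, (op (y i)) • Pi.single i (1 : Q) := by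
        funext j
        rw [Finset.sum_apply]
        simp [MulOpposite.smul_eq_mul_unop, Pi.single_apply]
      conv_lhs => rw [hyrep]
      rw [map_sum, unop_sum]
      refine Finset.sum_congr rfl fun i _ => ?_
      rw [map_smul, smul_eq_mul, unop_mul, unop_op]
    -- uniform lower bound for the coefficients of G
    have hbound : ∀ s : Finset (Fin n), ∃ b : ℤ, ∀ i ∈ s, (b : WithTop ℤ) ≤ v (a i) := by
      intro s
      induction s using Finset.cons_induction with
      | empty => exact ⟨0, by simp⟩
      | cons j s hj ih =>
        obtain ⟨b, hb⟩ := ih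
        rcases eq_or_ne (v (a j)) ⊤ with hc | hc
        · refine ⟨b, fun i hi => ?_⟩
          rcases Finset.mem_cons.1 hi with h | h
          · rw [h, hc]; exact le_top
          · exact hb i h
        · obtain ⟨c, hc⟩ := WithTop.ne_top_iff_exists.1 hc
          refine ⟨min b c, fun i hi => ?_⟩
          rcases Finset.mem_cons.1 hi with h | h
          · rw [h, ← hc]; exact_mod_cast min_le_right b c
          · exact le_trans (by exact_mod_cast min_le_left b c) (hb i h)
    obtain ⟨b, hb⟩ := hbound Finset.univ
    have hFbound : ∀ y : Fin n → Q, (∀ i, 0 ≤ v (y i)) →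
        (b : WithTop ℤ) ≤ v ((G y).unop) := by
      intro y hy
      rw [hFy y]
      refine aux_vsum v hadd htop _ _ _ (fun i _ => ?_)
      rw [hmul]
      calc (b : WithTop ℤ) = (b : WithTop ℤ) + 0 := by rw [add_zero]
        _ ≤ v (a i) + v (y i) := add_le_add (hb i (Finset.mem_univ i)) (hy i)
    -- uniformizer
    obtain ⟨t, htv⟩ := hsurjv 1
    have ht0 : t ≠ 0 := by
      intro h; rw [h, hv0] at htv; exact absurd htv.symm (by simp)
    have htk : ∀ k : ℕ, v (t ^ k) = ((k : ℤ) : WithTop ℤ) := by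
      intro k
      induction k with
      | zero => simpa using hv1
      | succ k ih =>
        rw [pow_succ, hmul, ih, htv, ← WithTop.coe_add]
        norm_num
    have htinv : v t⁻¹ = ((-1 : ℤ) : WithTop ℤ) := by
      have h := hvinv t ht0
      rw [htv] at h
      obtain ⟨c, hc⟩ := hfin t⁻¹ (inv_ne_zero ht0)
      rw [hc, ← WithTop.coe_add] at h
      have h1c : (1 : ℤ) + c = 0 := by exact_mod_cast h
      have : c = -1 := by omega
      rw [hc, this]
    -- iteration
    have iter : ∀ k : ℕ, ∃ y : Fin n → Q, y ∈ V ∧ (∀ i, 0 ≤ v (y i)) ∧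
        x' - (op (t ^ k)) • y ∈ Submodule.span Qᵐᵒᵖ (Set.range w) := by
      intro k
      induction k with
      | zero => exact ⟨x', hx'V, hx'R, by simp⟩
      | succ k ih =>
        obtain ⟨y, hyV, hyR, hyW⟩ := ih
        have hρy : (fun i => ρ (y i)) ∈
            Submodule.span Lᵐᵒᵖ (Set.range fun k : Fin r => fun i => ρ (w k i)) := by
          rw [hspan]
          exact Submodule.subset_span ⟨y, hyV, hyR, rfl⟩
        obtain ⟨lam, hlam⟩ := (Submodule.mem_span_range_iff_exists_fun Lᵐᵒᵖ).1 hρy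
        choose cc hccR hccρ using fun j => hρsurj (lam j).unop
        set z : Fin n → Q := y - ∑ j, (op (cc j)) • w j with hzdef
        have hzV : z ∈ V := Submodule.sub_mem V hyV
          (Submodule.sum_mem V fun j _ => Submodule.smul_mem V _ (hwV j))
        have hzcoord : ∀ i, z i = y i - ∑ j, w j i * cc j := by
          intro i
          simp [hzdef, Finset.sum_apply, MulOpposite.smul_eq_mul_unop]
        have hsumR : ∀ i, 0 ≤ v (∑ j, w j i * cc j) := fun i =>
          aux_vsum v hadd htop _ _ _ fun j _ => by
            rw [hmul]; exact add_nonneg (hwR j i) (hccR j)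
        have hzR : ∀ i, 0 ≤ v (z i) := by
          intro i
          rw [hzcoord i, sub_eq_add_neg]
          refine le_trans (le_min (hyR i) ?_) (hadd _ _)
          rw [hvneg]; exact hsumR i
        have hρz : ∀ i, ρ (z i) = 0 := by
          intro i
          have h1 : ρ (y i) = ∑ j, ρ (w j i) * ρ (cc j) := by
            have h := congrFun hlam i
            simp only [Finset.sum_apply, Pi.smul_apply,
              MulOpposite.smul_eq_mul_unop] at h
            rw [← h]
            exact Finset.sum_congr rfl fun j _ => by rw [hccρ j]
          have h2 : ρ (∑ j, w j i * cc j) = ∑ j, ρ (w j i) * ρ (cc j) := by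
            rw [aux_rhosum v hadd htop ρ hρadd hρ0 _ _
              (fun j _ => by rw [hmul]; exact add_nonneg (hwR j i) (hccR j))]
            exact Finset.sum_congr rfl fun j _ => hρmul _ _ (hwR j i) (hccR j)
          have h3 : ρ (y i) = ρ (∑ j, w j i * cc j) + ρ (z i) := by
            rw [← hρadd _ _ (hsumR i) (hzR i)]
            congr 1
            rw [hzcoord i]; abel
          have : ρ (z i) = ρ (y i) - ρ (∑ j, w j i * cc j) := by
            rw [h3]; abel
          rw [this, h1, h2, sub_self]
        have hz1 : ∀ i, (1 : WithTop ℤ) ≤ v (z i) := by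
          intro i
          have hlt := (hρker _ (hzR i)).1 (hρz i)
          rcases eq_or_ne (v (z i)) ⊤ with hc | hc
          · rw [hc]; exact le_top
          · obtain ⟨c, hc⟩ := WithTop.ne_top_iff_exists.1 hc
            rw [← hc] at hlt ⊢
            have h0c : (0 : ℤ) < c := by exact_mod_cast hlt
            exact_mod_cast h0c
        set y' : Fin n → Q := (op t⁻¹) • z with hy'def
        have hy'R : ∀ i, 0 ≤ v (y' i) := by
          intro i
          show 0 ≤ v (z i * t⁻¹)
          rw [hmul, htinv]
          rcases eq_or_ne (v (z i)) ⊤ with hc | hc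
          · rw [hc]; simp
          · obtain ⟨c, hc⟩ := WithTop.ne_top_iff_exists.1 hc
            have h := hz1 i
            rw [← hc] at h ⊢
            have hc1 : (1 : ℤ) ≤ c := by exact_mod_cast h
            rw [← WithTop.coe_add]
            have hfin2 : (0 : ℤ) ≤ c + (-1) := by omega
            exact_mod_cast hfin2
        refine ⟨y', Submodule.smul_mem V _ hzV, hy'R, ?_⟩
        have hkey : (op (t ^ (k + 1))) • y' = (op (t ^ k)) • z := by
          funext i
          show z i * t⁻¹ * t ^ (k + 1) = z i * t ^ k
          rw [pow_succ', mul_assoc, ← mul_assoc t⁻¹ t _, inv_mul_cancel₀ ht0, one_mul]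
        rw [hkey]
        have hsplit : x' - (op (t ^ k)) • z =
            (x' - (op (t ^ k)) • y) + (op (t ^ k)) • (∑ j, (op (cc j)) • w j) := by
          rw [hzdef, smul_sub]; abel
        rw [hsplit]
        exact Submodule.add_mem _ hyW (Submodule.smul_mem _ _
          (Submodule.sum_mem _ fun j _ =>
            Submodule.smul_mem _ _ (Submodule.subset_span ⟨j, rfl⟩)))
    -- final contradiction
    obtain ⟨y, hyV, hyR, hyW⟩ := iter (1 - b).toNat
    have hGeq : G x' = G ((op (t ^ (1 - b).toNat)) • y) :=
      sub_eq_zero.1 (by rw [← map_sub]; exact hGW _ hyW)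
    have h1 : (1 : Qᵐᵒᵖ) = op (t ^ (1 - b).toNat) * G y := by
      rw [← hGx', hGeq, map_smul, smul_eq_mul]
    have h2 : (1 : Q) = (G y).unop * t ^ (1 - b).toNat := by
      have := congrArg unop h1
      simpa using this
    have h3 := congrArg v h2
    rw [hv1, hmul, htk] at h3
    have h4 := hFbound y hyR
    have hGy0 : (G y).unop ≠ 0 := by
      intro h0
      rw [h0, zero_mul] at h2
      exact one_ne_zero h2
    obtain ⟨c, hc⟩ := hfin _ hGy0
    rw [hc] at h3 h4
    rw [← WithTop.coe_add] at h3
    have hcz : (0 : ℤ) = c + ((1 - b).toNat : ℤ) := by exact_mod_cast h3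
    have hbc : b ≤ c := by exact_mod_cast h4
    omega
  refine ⟨hind1, hspaneq, ?_⟩
  rw [← hspaneq]
  simpa using finrank_span_eq_card hind1
end

section
/- Let E be a ring that is a left and right Ore domain with division ring of fractions Q, and let v : E → ℤ ∪ {∞} be a valuation on E (v(ab) = v(a)+v(b), v(a+b) ≥ min(v(a),v(b)), v(a) = ∞ iff a = 0). Then there is a unique valuation on Q extending v, given by v(φ⁻¹ψ) = −v(φ) + v(ψ) for φ, ψ ∈ E, φ ≠ 0. -/
/-- A valuation on a left and right Ore domain `E` extends uniquely to its division ring of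
fractions `Q` (encoded as: `E` is a subring of the division ring `Q` such that every element
of `Q` is a left fraction `φ⁻¹ * ψ` with `φ, ψ ∈ E`, `φ ≠ 0`), via `v(φ⁻¹ψ) = -v(φ) + v(ψ)`
(written additively as `w(φ⁻¹ψ) + v(φ) = v(ψ)`). -/
theorem stmt_4 {Q : Type*} [DivisionRing Q] (E : Subring Q)
    (hOre : ∀ q : Q, ∃ φ ψ : E, (φ : Q) ≠ 0 ∧ q = (φ : Q)⁻¹ * (ψ : Q))
    (v : E → WithTop ℤ)
    (hmul : ∀ a b : E, v (a * b) = v a + v b)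
    (hadd : ∀ a b : E, min (v a) (v b) ≤ v (a + b))
    (htop : ∀ a : E, v a = ⊤ ↔ a = 0) :
    ∃! w : Q → WithTop ℤ,
      (∀ a b : Q, w (a * b) = w a + w b) ∧
      (∀ a b : Q, min (w a) (w b) ≤ w (a + b)) ∧
      (∀ x : Q, w x = ⊤ ↔ x = 0) ∧
      (∀ a : E, w (a : Q) = v a) ∧
      (∀ φ ψ : E, (φ : Q) ≠ 0 → w ((φ : Q)⁻¹ * (ψ : Q)) + v φ = v ψ) := by
  classical
  -- basic facts
  have hvne : ∀ a : E, (a : Q) ≠ 0 → v a ≠ ⊤ := by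
    intro a ha h
    exact ha (by rw [(htop a).mp h]; simp)
  have hv1 : v 1 = 0 := by
    have h1 : v 1 ≠ ⊤ := hvne 1 (by simp)
    have := hmul 1 1
    rw [one_mul] at this
    obtain ⟨n, hn⟩ := WithTop.ne_top_iff_exists.mp h1
    rw [← hn] at this ⊢
    have h2 : n = n + n := by exact_mod_cast this
    have h3 : n = 0 := by omega
    exact_mod_cast h3
  -- key manipulation lemma : turning Q-level fraction equalities into E-level identities
  have key : ∀ φ ψ φ' ψ' : E, (φ : Q) ≠ 0 → (φ' : Q) ≠ 0 →
      (φ : Q)⁻¹ * ψ = (φ' : Q)⁻¹ * ψ' → v ψ + v φ' = v ψ' + v φ := by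
    intro φ ψ φ' ψ' hφ hφ' h
    obtain ⟨α, β, hα, hαβ⟩ := hOre ((φ' : Q) * (φ : Q)⁻¹)
    -- β * φ = α * φ'
    have h1 : (β : Q) * φ = (α : Q) * φ' := by
      have := congrArg (fun x => (α : Q) * x * φ) hαβ
      simp only [← mul_assoc] at this
      rw [mul_inv_cancel₀ hα, one_mul, mul_assoc, inv_mul_cancel₀ hφ, mul_one] at this
      exact this.symm
    -- β * ψ = α * ψ'
    have h2 : (β : Q) * ψ = (α : Q) * ψ' := by
      have hψ' : (ψ' : Q) = (φ' : Q) * ((φ : Q)⁻¹ * ψ) := by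
        rw [h, ← mul_assoc, mul_inv_cancel₀ hφ', one_mul]
      calc (β : Q) * ψ = (α : Q) * ((φ' : Q) * (φ : Q)⁻¹) * ψ := by
            rw [hαβ, ← mul_assoc, mul_inv_cancel₀ hα, one_mul]
        _ = (α : Q) * ψ' := by rw [hψ']; simp only [mul_assoc]
    have hβ : (β : Q) ≠ 0 := by
      intro hb
      rw [hb, zero_mul] at h1
      exact hφ' (by
        rcases mul_eq_zero.mp h1.symm with h | h
        · exact absurd h hα
        · exact h)
    have e1 : v β + v φ = v α + v φ' := by
      rw [← hmul, ← hmul]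
      congr 1
      exact Subtype.ext (by push_cast; exact h1)
    have e2 : v β + v ψ = v α + v ψ' := by
      rw [← hmul, ← hmul]
      congr 1
      exact Subtype.ext (by push_cast; exact h2)
    -- combine: v ψ + v φ' = v ψ' + v φ after cancelling v α + v β (both finite)
    have hαt : v α ≠ ⊤ := hvne α hα
    have hβt : v β ≠ ⊤ := hvne β hβ
    have hc : v α + v β ≠ ⊤ := by
      rw [WithTop.add_ne_top]; exact ⟨hαt, hβt⟩
    apply WithTop.add_right_cancel hc
    calc v ψ + v φ' + (v α + v β)
        = (v β + v ψ) + (v α + v φ') := by abel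
      _ = (v α + v ψ') + (v β + v φ) := by rw [e2, e1]
      _ = v ψ' + v φ + (v α + v β) := by abel
  -- construct w together with its characterizing property
  obtain ⟨w, char⟩ : ∃ w : Q → WithTop ℤ,
      ∀ (q : Q) (φ ψ : E), (φ : Q) ≠ 0 → q = (φ : Q)⁻¹ * ψ → w q + v φ = v ψ := by
    refine ⟨fun q => v (hOre q).choose_spec.choose +
      (((-((v (hOre q).choose).untopD 0)) : ℤ) : WithTop ℤ), ?_⟩
    intro q φ ψ hφ hq
    set φ₀ : E := (hOre q).choose with hφ₀
    set ψ₀ : E := (hOre q).choose_spec.choose with hψ₀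
    obtain ⟨hφ₀ne, hq₀⟩ := (hOre q).choose_spec.choose_spec
    have hwf : v ψ₀ + v φ = v ψ + v φ₀ := key φ₀ ψ₀ φ ψ hφ₀ne hφ (hq₀ ▸ hq)
    have hφ₀t : v φ₀ ≠ ⊤ := hvne φ₀ hφ₀ne
    obtain ⟨n, hn⟩ := WithTop.ne_top_iff_exists.mp hφ₀t
    apply WithTop.add_right_cancel hφ₀t
    calc v ψ₀ + ((-((v φ₀).untopD 0) : ℤ) : WithTop ℤ) + v φ + v φ₀
        = (v ψ₀ + v φ) + (((-((v φ₀).untopD 0) : ℤ) : WithTop ℤ) + v φ₀) := by abel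
      _ = (v ψ + v φ₀) + 0 := by
          rw [hwf]
          congr 1
          rw [← hn]
          simp only [WithTop.untopD_coe, ← WithTop.coe_add, neg_add_cancel, WithTop.coe_zero]
      _ = v ψ + 0 + v φ₀ := by abel
      _ = v ψ + v φ₀ := by rw [add_zero]
  clear key
  -- value of w at 0 : note 0 = 1⁻¹ * 0
  have hw0 : w 0 = ⊤ := by
    have := char 0 1 0 (by simp) (by simp)
    rw [hv1, add_zero] at this
    rw [this, htop]
  have hwE : ∀ a : E, w (a : Q) = v a := by
    intro a
    have := char (a : Q) 1 a (by simp) (by simp)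
    rwa [hv1, add_zero] at this
  -- multiplicativity
  have hWmul : ∀ a b : Q, w (a * b) = w a + w b := by
    intro a b
    obtain ⟨φ, ψ, hφ, ha⟩ := hOre a
    obtain ⟨φ', ψ', hφ', hb⟩ := hOre b
    obtain ⟨α, β, hα, hαβ⟩ := hOre ((ψ : Q) * (φ' : Q)⁻¹)
    -- α * ψ = β * φ'
    have h1 : (α : Q) * ψ = (β : Q) * φ' := by
      have := congrArg (fun x => (α : Q) * x * φ') hαβ.symm
      simp only [← mul_assoc] at this
      rw [mul_inv_cancel₀ hα, one_mul, mul_assoc, inv_mul_cancel₀ hφ', mul_one] at this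
      exact this.symm
    have e1 : v α + v ψ = v β + v φ' := by
      rw [← hmul, ← hmul]; congr 1; exact Subtype.ext (by push_cast; exact h1)
    -- a * b = (α * φ)⁻¹ * (β * ψ')
    have hab : a * b = ((α * φ : E) : Q)⁻¹ * ((β * ψ' : E) : Q) := by
      rw [ha, hb]
      push_cast
      rw [mul_inv_rev]
      rw [mul_assoc, ← mul_assoc (ψ : Q), hαβ]
      simp only [mul_assoc]
    have hαφ : ((α * φ : E) : Q) ≠ 0 := by push_cast; exact mul_ne_zero hα hφ
    have hch := char (a * b) (α * φ) (β * ψ') hαφ hab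
    rw [hmul, hmul] at hch
    -- hch : w (a*b) + (v α + v φ) = v β + v ψ'
    have hcha := char a φ ψ hφ ha
    have hchb := char b φ' ψ' hφ' hb
    have hαt : v α ≠ ⊤ := hvne α hα
    have hφt : v φ ≠ ⊤ := hvne φ hφ
    have hφ't : v φ' ≠ ⊤ := hvne φ' hφ'
    have hc : v α + v φ + v φ' ≠ ⊤ := by
      rw [WithTop.add_ne_top, WithTop.add_ne_top]; exact ⟨⟨hαt, hφt⟩, hφ't⟩
    apply WithTop.add_right_cancel hc
    calc w (a * b) + (v α + v φ + v φ')
        = (w (a * b) + (v α + v φ)) + v φ' := by abel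
      _ = (v β + v ψ') + v φ' := by rw [hch]
      _ = v β + v φ' + v ψ' := by abel
      _ = (v α + v ψ) + v ψ' := by rw [← e1]
      _ = v α + (w a + v φ) + (w b + v φ') := by rw [hcha, hchb]
      _ = w a + w b + (v α + v φ + v φ') := by abel
  -- ultrametric inequality
  have hWadd : ∀ a b : Q, min (w a) (w b) ≤ w (a + b) := by
    intro a b
    obtain ⟨φ, ψ, hφ, ha⟩ := hOre a
    obtain ⟨φ', ψ', hφ', hb⟩ := hOre b
    obtain ⟨α, β, hα, hαβ⟩ := hOre ((φ' : Q) * (φ : Q)⁻¹)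
    -- β * φ = α * φ'
    have h1 : (β : Q) * φ = (α : Q) * φ' := by
      have := congrArg (fun x => (α : Q) * x * φ) hαβ
      simp only [← mul_assoc] at this
      rw [mul_inv_cancel₀ hα, one_mul, mul_assoc, inv_mul_cancel₀ hφ, mul_one] at this
      exact this.symm
    have hβ : (β : Q) ≠ 0 := by
      intro hbz
      rw [hbz, zero_mul] at h1
      rcases mul_eq_zero.mp h1.symm with h | h
      · exact hα h
      · exact hφ' h
    have hβφ : ((β * φ : E) : Q) ≠ 0 := by push_cast; exact mul_ne_zero hβ hφ
    -- a + b = (β*φ)⁻¹ * (β*ψ + α*ψ')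
    have hab : a + b = ((β * φ : E) : Q)⁻¹ * ((β * ψ + α * ψ' : E) : Q) := by
      rw [ha, hb]
      push_cast
      rw [mul_inv_rev, mul_add]
      congr 1
      · rw [mul_assoc, ← mul_assoc (β : Q)⁻¹, inv_mul_cancel₀ hβ, one_mul]
      · have hinv : (φ : Q)⁻¹ * (β : Q)⁻¹ = (φ' : Q)⁻¹ * (α : Q)⁻¹ := by
          rw [← mul_inv_rev, ← mul_inv_rev, h1]
        rw [hinv, mul_assoc, ← mul_assoc (α : Q)⁻¹, inv_mul_cancel₀ hα, one_mul]
    have hch := char (a + b) (β * φ) (β * ψ + α * ψ') hβφ hab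
    rw [hmul] at hch
    have hcha := char a φ ψ hφ ha
    have hchb := char b φ' ψ' hφ' hb
    have e1 : v β + v φ = v α + v φ' := by
      rw [← hmul, ← hmul]; congr 1; exact Subtype.ext (by push_cast; exact h1)
    have hβt : v β ≠ ⊤ := hvne β hβ
    have hφt : v φ ≠ ⊤ := hvne φ hφ
    have hc : v β + v φ ≠ ⊤ := by rw [WithTop.add_ne_top]; exact ⟨hβt, hφt⟩
    rw [← WithTop.add_le_add_iff_right hc]
    calc min (w a) (w b) + (v β + v φ)
        = min (w a + (v β + v φ)) (w b + (v β + v φ)) := (min_add_add_right _ _ _).symm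
      _ = min (v β + (w a + v φ)) (v α + (w b + v φ')) := by
          congr 1
          · abel
          · rw [e1]; abel
      _ = min (v β + v ψ) (v α + v ψ') := by rw [hcha, hchb]
      _ = min (v (β * ψ)) (v (α * ψ')) := by rw [hmul, hmul]
      _ ≤ v (β * ψ + α * ψ') := hadd _ _
      _ = w (a + b) + (v β + v φ) := hch.symm
  -- top iff zero
  have hWtop : ∀ x : Q, w x = ⊤ ↔ x = 0 := by
    intro x
    obtain ⟨φ, ψ, hφ, hx⟩ := hOre x
    have hch := char x φ ψ hφ hx
    have hφt : v φ ≠ ⊤ := hvne φ hφ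
    constructor
    · intro h
      rw [h, WithTop.top_add] at hch
      have : ψ = 0 := (htop ψ).mp hch.symm
      rw [hx, this]; simp
    · intro h
      rw [h, hw0]
  -- the last property
  have hWfrac : ∀ φ ψ : E, (φ : Q) ≠ 0 → w ((φ : Q)⁻¹ * (ψ : Q)) + v φ = v ψ :=
    fun φ ψ hφ => char _ φ ψ hφ rfl
  refine ⟨w, ⟨hWmul, hWadd, hWtop, hwE, hWfrac⟩, ?_⟩
  -- uniqueness
  rintro w' ⟨-, -, -, -, h5⟩
  funext q
  obtain ⟨φ, ψ, hφ, hq⟩ := hOre q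
  have hφt : v φ ≠ ⊤ := hvne φ hφ
  apply WithTop.add_right_cancel hφt
  rw [hq, h5 φ ψ hφ, hWfrac φ ψ hφ]
end

section
/- Let K be an algebraically closed field of characteristic p > 0 and let L be a field extension of K of transcendence degree 1. For any x, y ∈ L \ K, either x is separable algebraic over K(y) or y is separable algebraic over K(x). -/
open Polynomial

section Aux

variable (K : Type*) {L : Type*} [Field K] [Field L] [Algebra K L]

/-- Separability criterion: an element is separable if it is a root of a polynomial whose
derivative does not vanish there. -/
theorem aux_crit {F : Type*} [Field F] [Algebra F L] (z : L) (P : F[X])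
    (h0 : Polynomial.aeval z P = 0)
    (h1 : Polynomial.aeval z (derivative P) ≠ 0) : IsSeparable F z := by
  have hP : P ≠ 0 := by rintro rfl; simp at h1
  have halg : IsIntegral F z := (IsAlgebraic.isIntegral ⟨P, hP, h0⟩)
  obtain ⟨h, hh⟩ := minpoly.dvd F z h0
  rw [IsSeparable, separable_iff_derivative_ne_zero (minpoly.irreducible halg)]
  intro hder
  apply h1
  rw [hh, derivative_mul, map_add, map_mul, map_mul, minpoly.aeval, hder]
  simp

theorem aux_trans_of_not_mem [IsAlgClosed K] {z : L} (hz : z ∉ Set.range (algebraMap K L)) :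
    Transcendental K z := by
  intro halg
  have hint : IsIntegral K z := halg.isIntegral
  have h1 : (minpoly K z).degree = 1 :=
    IsAlgClosed.degree_eq_one_of_irreducible K (minpoly.irreducible hint)
  have h2 := Polynomial.eq_X_add_C_of_degree_eq_one h1
  rw [(minpoly.monic hint).leadingCoeff, map_one, one_mul] at h2
  have h3 := minpoly.aeval K z
  rw [h2] at h3
  simp only [map_add, aeval_X, aeval_C] at h3
  exact hz ⟨-(minpoly K z).coeff 0, by rw [map_neg]; linear_combination -h3⟩

/-- Evaluation of `f ∈ K[X][Y]` at `X := x`, `Y := y` (outer variable is `Y`). -/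
noncomputable def Psi (x y : L) : Polynomial (Polynomial K) →ₐ[K] L :=
  Polynomial.eval₂AlgHom (Polynomial.aeval x) y fun _ => Commute.all _ _

theorem Psi_C (x y : L) (c : K[X]) : Psi K x y (C c) = Polynomial.aeval x c := by simp [Psi]

theorem Psi_X (x y : L) : Psi K x y X = y := by simp [Psi]

theorem aux_exists_rel (x y : L) (h : ¬ AlgebraicIndependent K ![y, x]) :
    ∃ f : Polynomial (Polynomial K), f ≠ 0 ∧ Psi K x y f = 0 := by
  rw [algebraicIndependent_iff] at h
  push_neg at h
  obtain ⟨F, hF0, hFne⟩ := h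
  let e : MvPolynomial (Fin 2) K ≃ₐ[K] Polynomial (Polynomial K) :=
    (MvPolynomial.finSuccEquiv K 1).trans (Polynomial.mapAlgEquiv
      ((MvPolynomial.finSuccEquiv K 0).trans
        (Polynomial.mapAlgEquiv (MvPolynomial.isEmptyAlgEquiv K (Fin 0)))))
  have key : (Psi K x y).comp e.toAlgHom = MvPolynomial.aeval ![y, x] := by
    apply MvPolynomial.algHom_ext
    intro i
    fin_cases i
    · simp [e, Psi, MvPolynomial.finSuccEquiv_X_zero]
    · have h1 : (1 : Fin 2) = (0 : Fin 1).succ := rfl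
      have h2 : e (MvPolynomial.X 1) = C X := by
        rw [h1]
        simp only [e, AlgEquiv.trans_apply, MvPolynomial.finSuccEquiv_X_succ]
        simp [MvPolynomial.finSuccEquiv_X_zero]
      show (Psi K x y) (e (MvPolynomial.X 1)) = (MvPolynomial.aeval ![y, x]) (MvPolynomial.X 1)
      rw [h2, Psi_C]
      simp
  refine ⟨e F, fun h0 => hFne (e.injective (by simpa using h0)), ?_⟩
  have := DFunLike.congr_fun key F
  simpa [hF0] using this

/-- coefficient-wise derivative (the partial derivative in `X`). -/
noncomputable def fX (f : Polynomial (Polynomial K)) : Polynomial (Polynomial K) :=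
  ∑ i ∈ f.support, C (derivative (f.coeff i)) * X ^ i

theorem coeff_fX (f : Polynomial (Polynomial K)) (n : ℕ) :
    (fX K f).coeff n = derivative (f.coeff n) := by
  rw [fX, finset_sum_coeff]
  simp only [coeff_C_mul, coeff_X_pow, mul_ite, mul_one, mul_zero]
  rw [Finset.sum_ite_eq f.support n fun i => derivative (f.coeff i)]
  split_ifs with h
  · rfl
  · rw [notMem_support_iff.mp h, map_zero]

/-- A measure of the size of the coefficients. -/
noncomputable def mu (f : Polynomial (Polynomial K)) : ℕ :=
  ∑ i ∈ f.support, ((f.coeff i).natDegree + 1)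

theorem support_fX_subset (f : Polynomial (Polynomial K)) : (fX K f).support ⊆ f.support := by
  intro i hi
  rw [mem_support_iff, coeff_fX] at hi
  rw [mem_support_iff]
  intro h
  rw [h] at hi; simp at hi

theorem natDegree_fX_le (f : Polynomial (Polynomial K)) : (fX K f).natDegree ≤ f.natDegree := by
  apply natDegree_le_iff_coeff_eq_zero.mpr
  intro n hn
  rw [coeff_fX, coeff_eq_zero_of_natDegree_lt hn, map_zero]

theorem mu_fX_lt (f : Polynomial (Polynomial K)) (h : fX K f ≠ 0) : mu K (fX K f) < mu K f := by
  have hsub := support_fX_subset K f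
  calc ∑ i ∈ (fX K f).support, (((fX K f).coeff i).natDegree + 1)
      ≤ ∑ i ∈ (fX K f).support, (f.coeff i).natDegree := by
        apply Finset.sum_le_sum
        intro i hi
        rw [mem_support_iff, coeff_fX] at hi
        rw [coeff_fX]
        have hd : (f.coeff i).natDegree ≠ 0 := by
          intro h0
          rw [eq_C_of_natDegree_eq_zero h0] at hi
          simp at hi
        exact Nat.succ_le_of_lt (natDegree_derivative_lt hd)
    _ < ∑ i ∈ (fX K f).support, ((f.coeff i).natDegree + 1) := by
        apply Finset.sum_lt_sum_of_nonempty (support_nonempty.mpr h)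
        intro i _
        exact Nat.lt_succ_self _
    _ ≤ mu K f := Finset.sum_le_sum_of_subset hsub

theorem aux_sep_right (x y : L) (f : Polynomial (Polynomial K)) (h0 : Psi K x y f = 0)
    (h1 : Psi K x y (derivative f) ≠ 0) :
    IsSeparable (IntermediateField.adjoin K {x}) y := by
  set F := IntermediateField.adjoin K {x}
  set x' : F := ⟨x, IntermediateField.mem_adjoin_simple_self K x⟩ with hx'
  set φ : K[X] →+* F := (Polynomial.aeval x').toRingHom with hφ
  have hcomp : (algebraMap F L).comp φ = ((Polynomial.aeval x : K[X] →ₐ[K] L) : K[X] →+* L) := by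
    apply Polynomial.ringHom_ext
    · intro a
      simp only [RingHom.coe_comp, Function.comp_apply, hφ, AlgHom.toRingHom_eq_coe,
        RingHom.coe_coe, aeval_C]
      exact (IsScalarTower.algebraMap_apply K F L a).symm
    · simp [hφ, hx']
  have key : ∀ g : Polynomial (Polynomial K),
      Polynomial.aeval y (g.map φ) = Psi K x y g := by
    intro g
    rw [Polynomial.aeval_def, Polynomial.eval₂_map, hcomp]
    simp [Psi]
  apply aux_crit y (f.map φ)
  · rw [key]; exact h0
  · rw [Polynomial.derivative_map, key]; exact h1

theorem aux_sep_left (x y : L) (f : Polynomial (Polynomial K)) (h0 : Psi K x y f = 0)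
    (h1 : Psi K x y (fX K f) ≠ 0) :
    IsSeparable (IntermediateField.adjoin K {y}) x := by
  set E := IntermediateField.adjoin K {y}
  set y' : E := ⟨y, IntermediateField.mem_adjoin_simple_self K y⟩ with hy'
  set Q : Polynomial E := ∑ i ∈ f.support, C (y' ^ i) * ((f.coeff i).map (algebraMap K E))
    with hQ
  have hQval : Polynomial.aeval x Q = Psi K x y f := by
    rw [hQ, map_sum]
    have hf : Psi K x y f = ∑ i ∈ f.support, Polynomial.aeval x (f.coeff i) * y ^ i := by
      conv_lhs => rw [f.as_sum_support]
      rw [map_sum]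
      refine Finset.sum_congr rfl fun i _ => ?_
      rw [← C_mul_X_pow_eq_monomial, map_mul, map_pow, Psi_C, Psi_X]
    rw [hf]
    refine Finset.sum_congr rfl fun i _ => ?_
    rw [map_mul, aeval_C, aeval_map_algebraMap, map_pow]
    have : (algebraMap E L) y' = y := rfl
    rw [this, mul_comm]
  have hQder : Polynomial.aeval x (derivative Q) = Psi K x y (fX K f) := by
    rw [hQ, derivative_sum]
    have hf : Psi K x y (fX K f)
        = ∑ i ∈ f.support, Polynomial.aeval x (derivative (f.coeff i)) * y ^ i := by
      rw [fX, map_sum]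
      refine Finset.sum_congr rfl fun i _ => ?_
      rw [map_mul, map_pow, Psi_C, Psi_X]
    rw [hf, map_sum]
    refine Finset.sum_congr rfl fun i _ => ?_
    rw [derivative_C_mul, Polynomial.derivative_map, map_mul, aeval_C,
      aeval_map_algebraMap, map_pow]
    have : (algebraMap E L) y' = y := rfl
    rw [this, mul_comm]
  apply aux_crit x Q
  · rw [hQval]; exact h0
  · rw [hQder]; exact h1

theorem aux_pth_root_poly (p : ℕ) [Fact p.Prime] [CharP K p] [IsAlgClosed K] (c : K[X])
    (hc : derivative c = 0) : ∃ d : K[X], d ^ p = c := by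
  obtain ⟨d, hd⟩ := Polynomial.map_surjective (frobenius K p)
    (surjective_frobenius K p) (Polynomial.contract p c)
  refine ⟨d, ?_⟩
  rw [← Polynomial.map_frobenius_expand, Polynomial.map_expand, hd,
    Polynomial.expand_contract p hc (Fact.out (p := p.Prime)).ne_zero]

theorem aux_pth_root (p : ℕ) [Fact p.Prime] [CharP K p] [IsAlgClosed K]
    (f : Polynomial (Polynomial K))
    (h1 : ∀ i, ¬ p ∣ i → f.coeff i = 0) (h2 : ∀ i, derivative (f.coeff i) = 0) :
    ∃ h : Polynomial (Polynomial K), h ^ p = f := by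
  have hp : p ≠ 0 := (Fact.out (p := p.Prime)).ne_zero
  have hdY : derivative f = 0 := by
    ext n
    rw [coeff_derivative, coeff_zero]
    by_cases hdvd : p ∣ (n + 1)
    · have hcast : ((n : Polynomial K) + 1) = 0 := by
        have := (CharP.cast_eq_zero_iff (Polynomial K) p (n + 1)).mpr hdvd
        push_cast at this
        exact_mod_cast this
      rw [hcast, mul_zero]
    · rw [h1 _ hdvd, zero_mul]
  set g := Polynomial.contract p f with hg
  have hcoeff : ∀ j, g.coeff j = f.coeff (j * p) := fun j => Polynomial.coeff_contract hp f j
  have hroot : ∀ j, ∃ d : K[X], d ^ p = g.coeff j := by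
    intro j
    apply aux_pth_root_poly K p
    rw [hcoeff]
    exact h2 _
  choose d hd using hroot
  refine ⟨∑ j ∈ g.support, C (d j) * X ^ j, ?_⟩
  have hmap : Polynomial.map (frobenius (Polynomial K) p) (∑ j ∈ g.support, C (d j) * X ^ j)
      = g := by
    rw [Polynomial.map_sum]
    conv_rhs => rw [g.as_sum_support]
    refine Finset.sum_congr rfl fun j _ => ?_
    rw [Polynomial.map_mul, Polynomial.map_pow, Polynomial.map_C, Polynomial.map_X,
      C_mul_X_pow_eq_monomial]
    congr 1
    rw [frobenius_def, hd]
  calc (∑ j ∈ g.support, C (d j) * X ^ j) ^ p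
      = Polynomial.map (frobenius (Polynomial K) p)
          (Polynomial.expand (Polynomial K) p (∑ j ∈ g.support, C (d j) * X ^ j)) := by
        rw [Polynomial.map_frobenius_expand]
    _ = Polynomial.expand (Polynomial K) p
          (Polynomial.map (frobenius (Polynomial K) p) (∑ j ∈ g.support, C (d j) * X ^ j)) := by
        rw [Polynomial.map_expand]
    _ = Polynomial.expand (Polynomial K) p g := by rw [hmap]
    _ = f := Polynomial.expand_contract p hdY hp

end Aux

/-- Let `K` be algebraically closed of characteristic `p > 0` and `L/K` a field extension of
transcendence degree 1 (encoded: some element is transcendental, and no two elements are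
algebraically independent over `K`). For `x, y ∈ L \ K`, either `x` is separable algebraic
over `K(y)` or `y` is separable algebraic over `K(x)`. -/
theorem stmt_6 {K L : Type*} [Field K] [IsAlgClosed K] [Field L] [Algebra K L]
    (p : ℕ) (hp : p.Prime) [CharP K p]
    (htr1 : ∃ t : L, Transcendental K t)
    (htr2 : ∀ a b : L, ¬ AlgebraicIndependent K ![a, b])
    (x y : L) (hx : x ∉ Set.range (algebraMap K L)) (hy : y ∉ Set.range (algebraMap K L)) :
    IsSeparable (IntermediateField.adjoin K {y}) x ∨
    IsSeparable (IntermediateField.adjoin K {x}) y := by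
  classical
  haveI : Fact p.Prime := ⟨hp⟩
  have hxt : Transcendental K x := aux_trans_of_not_mem K hx
  obtain ⟨f0, hf00, hf0⟩ := aux_exists_rel K x y (htr2 y x)
  set Rel : Polynomial (Polynomial K) → Prop := fun f => f ≠ 0 ∧ Psi K x y f = 0 with hRel
  set S1 : Set ℕ := {n | ∃ f, Rel f ∧ f.natDegree = n} with hS1def
  have hS1 : S1.Nonempty := ⟨f0.natDegree, f0, ⟨hf00, hf0⟩, rfl⟩
  set d1 := sInf S1 with hd1def
  obtain ⟨f1, hf1rel, hf1d⟩ := Nat.sInf_mem hS1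
  set S2 : Set ℕ := {m | ∃ f, Rel f ∧ f.natDegree = d1 ∧ mu K f = m} with hS2def
  have hS2 : S2.Nonempty := ⟨mu K f1, f1, hf1rel, hf1d, rfl⟩
  obtain ⟨f, hfrel, hfd, hfm⟩ := Nat.sInf_mem hS2
  have hmin1 : ∀ g, Rel g → d1 ≤ g.natDegree := fun g hg => Nat.sInf_le ⟨g, hg, rfl⟩
  have hmin2 : ∀ g, Rel g → g.natDegree = d1 → mu K f ≤ mu K g := fun g hg hgd => by
    rw [hfm]; exact Nat.sInf_le ⟨g, hg, hgd, rfl⟩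
  have hd1pos : 1 ≤ d1 := by
    by_contra hlt
    push_neg at hlt
    have hd0 : f.natDegree = 0 := by omega
    have hfC := eq_C_of_natDegree_eq_zero hd0
    have hc : f.coeff 0 ≠ 0 := fun h => hfrel.1 (by rw [hfC, h, map_zero])
    apply hxt
    refine ⟨f.coeff 0, hc, ?_⟩
    have h2 := hfrel.2
    rw [hfC, Psi_C] at h2
    exact h2
  by_cases hcase : Psi K x y (derivative f) = 0
  · -- derivative in Y vanishes at (x,y); by minimality it's identically zero
    have hder0 : derivative f = 0 := by
      by_contra hne
      have h1 := hmin1 (derivative f) ⟨hne, hcase⟩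
      have h2 := Polynomial.natDegree_derivative_lt (p := f)
        (by omega : f.natDegree ≠ 0)
      omega
    have hpdvd : ∀ i, ¬ p ∣ i → f.coeff i = 0 := by
      intro i hi
      have hi0 : i ≠ 0 := by rintro rfl; exact hi (dvd_zero p)
      obtain ⟨n, rfl⟩ := Nat.exists_eq_succ_of_ne_zero hi0
      have hcd := congrArg (fun q => Polynomial.coeff q n) hder0
      simp only [coeff_derivative, coeff_zero] at hcd
      rcases mul_eq_zero.mp hcd with h | h
      · exact h
      · exfalso
        apply hi
        have hz : ((n + 1 : ℕ) : Polynomial K) = 0 := by push_cast; exact_mod_cast h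
        exact (CharP.cast_eq_zero_iff (Polynomial K) p (n + 1)).mp hz
    by_cases hfX : fX K f = 0
    · -- both partials vanish: f is a p-th power, contradiction with minimality
      exfalso
      have hc2 : ∀ i, derivative (f.coeff i) = 0 := fun i => by
        rw [← coeff_fX, hfX, coeff_zero]
      obtain ⟨h, hh⟩ := aux_pth_root K p f hpdvd hc2
      have hh0 : h ≠ 0 := by
        rintro rfl
        rw [zero_pow hp.ne_zero] at hh
        exact hfrel.1 hh.symm
      have hPsih : Psi K x y h = 0 := by
        have := congrArg (Psi K x y) hh
        rw [map_pow, hfrel.2] at this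
        exact pow_eq_zero_iff hp.ne_zero |>.mp this
      have hminh := hmin1 h ⟨hh0, hPsih⟩
      have hdeg : f.natDegree = p * h.natDegree := by
        rw [← hh, Polynomial.natDegree_pow, mul_comm]
      have hp2 := hp.two_le
      have : h.natDegree ≠ 0 := by
        intro h0
        rw [h0, mul_zero] at hdeg
        omega
      nlinarith [hminh, hdeg, hfd]
    · by_cases hPsiX : Psi K x y (fX K f) = 0
      · -- fX is a smaller relation: contradiction
        exfalso
        have hrelX : Rel (fX K f) := ⟨hfX, hPsiX⟩
        have h1 := hmin1 _ hrelX
        have h2 := natDegree_fX_le K f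
        have h3 := hmin2 _ hrelX (by omega)
        have h4 := mu_fX_lt K f hfX
        omega
      · exact Or.inl (aux_sep_left K x y f hfrel.2 hPsiX)
  · exact Or.inr (aux_sep_right K x y f hfrel.2 hcase)
end

section
/- Let ν : Bases → ℝ ∪ {∞} be a valuation of a matroid of rank r on ground set E (satisfying the valuated basis exchange axiom). Let S ⊆ E with |S| = r − 2 and let a, b, c, d be four distinct elements of E \ S. Then the minimum of the three quantities ν(S∪{a,b}) + ν(S∪{c,d}), ν(S∪{a,c}) + ν(S∪{b,d}), ν(S∪{a,d}) + ν(S∪{b,c}) is attained at least twice. -/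
open Finset

/-- Order lemma: if each of `p, q, r` dominates one of the other two, the minimum is
attained at least twice. -/
lemma tri_min {α : Type*} [LinearOrder α] {p q r : α}
    (h1 : r ≤ p ∨ q ≤ p) (h2 : p ≤ q ∨ r ≤ q) (h3 : p ≤ r ∨ q ≤ r) :
    p = min q r ∨ q = min p r ∨ r = min p q := by
  rcases h1 with h1 | h1 <;> rcases h2 with h2 | h2 <;> rcases h3 with h3 | h3
  · right; right; rw [min_eq_left h2]; exact le_antisymm h1 h3
  · left; rw [min_eq_left h3]; exact le_antisymm h2 (h3.trans h1)
  · right; right; rw [min_eq_left (h3.trans h2)]; exact le_antisymm h1 h3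
  · right; left; rw [min_eq_right h1]; exact le_antisymm h3 h2
  · right; left; rw [min_eq_left h3]; exact le_antisymm h1 h2
  · right; left; rw [min_eq_left (h2.trans h3)]; exact le_antisymm h1 h2
  · left; rw [min_eq_right h2]; exact le_antisymm h3 (h2.trans h1)
  · right; right; rw [min_eq_right h1]; exact le_antisymm h2 h3

/-- One application of the valuated exchange axiom: exchanging `a` out of `S ∪ {a,b}`
into `S ∪ {c,d}` gives one of the two cross inequalities. -/
lemma key_exch {E : Type*} [DecidableEq E] (r : ℕ) (ν : Finset E → WithTop ℝ)
    (hexch : ∀ B B' : Finset E, B.card = r → B'.card = r → ∀ i ∈ B \ B',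
      ∃ j ∈ B' \ B, ν (insert j (B.erase i)) + ν (insert i (B'.erase j)) ≤ ν B + ν B')
    (S : Finset E) (hS : S.card + 2 = r)
    (a b c d : E) (ha : a ∉ S) (hb : b ∉ S) (hc : c ∉ S) (hd : d ∉ S)
    (hab : a ≠ b) (hac : a ≠ c) (had : a ≠ d) (hbc : b ≠ c) (hbd : b ≠ d) (hcd : c ≠ d) :
    ν (insert c (insert b S)) + ν (insert a (insert d S)) ≤
      ν (insert a (insert b S)) + ν (insert c (insert d S)) ∨
    ν (insert d (insert b S)) + ν (insert a (insert c S)) ≤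
      ν (insert a (insert b S)) + ν (insert c (insert d S)) := by
  have haB : a ∉ insert b S := by simp [hab, ha]
  have hcB' : c ∉ insert d S := by simp [hcd, hc]
  have hdB' : d ∉ insert c S := by simp [Ne.symm hcd, hd]
  have hBcard : (insert a (insert b S)).card = r := by
    rw [card_insert_of_notMem haB, card_insert_of_notMem hb, hS]
  have hB'card : (insert c (insert d S)).card = r := by
    rw [card_insert_of_notMem hcB', card_insert_of_notMem hd, hS]
  have haMem : a ∈ insert a (insert b S) \ insert c (insert d S) := by
    simp [hac, had, ha]
  obtain ⟨j, hj, hle⟩ := hexch _ _ hBcard hB'card a haMem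
  rw [mem_sdiff] at hj
  have hjcd : j = c ∨ j = d := by
    rcases mem_insert.mp hj.1 with h | h
    · exact Or.inl h
    · rcases mem_insert.mp h with h | h
      · exact Or.inr h
      · exact absurd (by simp [h] : j ∈ insert a (insert b S)) hj.2
  rw [Finset.erase_insert haB] at hle
  rcases hjcd with h | h <;> rw [h] at hle
  · rw [Finset.erase_insert hcB'] at hle
    exact Or.inl hle
  · rw [Finset.insert_comm c d S, Finset.erase_insert hdB'] at hle
    rw [Finset.insert_comm c d S]
    exact Or.inr hle

/-- For a matroid valuation `ν` on the `r`-subsets of `E` (valuated exchange axiom, not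
identically `∞`), and `S` of size `r - 2` with four distinct elements `a,b,c,d ∉ S`, the
minimum of `ν(S∪ab)+ν(S∪cd)`, `ν(S∪ac)+ν(S∪bd)`, `ν(S∪ad)+ν(S∪bc)` is attained at least
twice. -/
theorem stmt_13 {E : Type*} [DecidableEq E] (r : ℕ) (ν : Finset E → WithTop ℝ)
    (hne : ∃ B : Finset E, B.card = r ∧ ν B ≠ ⊤)
    (hexch : ∀ B B' : Finset E, B.card = r → B'.card = r → ∀ i ∈ B \ B',
      ∃ j ∈ B' \ B, ν (insert j (B.erase i)) + ν (insert i (B'.erase j)) ≤ ν B + ν B')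
    (S : Finset E) (hS : S.card + 2 = r)
    (a b c d : E) (ha : a ∉ S) (hb : b ∉ S) (hc : c ∉ S) (hd : d ∉ S)
    (hab : a ≠ b) (hac : a ≠ c) (had : a ≠ d) (hbc : b ≠ c) (hbd : b ≠ d) (hcd : c ≠ d) :
    (ν (insert a (insert b S)) + ν (insert c (insert d S)) =
        min (ν (insert a (insert c S)) + ν (insert b (insert d S)))
            (ν (insert a (insert d S)) + ν (insert b (insert c S)))) ∨
    (ν (insert a (insert c S)) + ν (insert b (insert d S)) =
        min (ν (insert a (insert b S)) + ν (insert c (insert d S)))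
            (ν (insert a (insert d S)) + ν (insert b (insert c S)))) ∨
    (ν (insert a (insert d S)) + ν (insert b (insert c S)) =
        min (ν (insert a (insert b S)) + ν (insert c (insert d S)))
            (ν (insert a (insert c S)) + ν (insert b (insert d S)))) := by
  have h1 := key_exch r ν hexch S hS a b c d ha hb hc hd hab hac had hbc hbd hcd
  have h2 := key_exch r ν hexch S hS a c b d ha hc hb hd hac hab had (Ne.symm hbc) hcd hbd
  have h3 := key_exch r ν hexch S hS a d b c ha hd hb hc had hab hac (Ne.symm hbd)
    (Ne.symm hcd) hbc
  rw [Finset.insert_comm c b S, Finset.insert_comm d b S,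
    add_comm (ν (insert b (insert c S))) (ν (insert a (insert d S))),
    add_comm (ν (insert b (insert d S))) (ν (insert a (insert c S)))] at h1
  rw [Finset.insert_comm d c S,
    add_comm (ν (insert b (insert c S))) (ν (insert a (insert d S))),
    add_comm (ν (insert c (insert d S))) (ν (insert a (insert b S)))] at h2
  rw [add_comm (ν (insert b (insert d S))) (ν (insert a (insert c S))),
    add_comm (ν (insert c (insert d S))) (ν (insert a (insert b S)))] at h3
  exact tri_min h1 h2.symm h3.symm
end

section
/- Let M be a matroid on ground set E with valuation ν, and suppose i, j ∈ E are parallel elements of M (i.e., {i,j} is a circuit). Then there exists a constant c ∈ ℝ such that ν(S ∪ {i}) − ν(S ∪ {j}) = c for every S ⊆ E \ {i,j} such that S ∪ {i} is a basis of M. -/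
open Finset

/-- If `i, j` are parallel elements of a valuated matroid `(M, ν)` of rank `r` (every
`r`-set containing both `i` and `j` is dependent, and `S ∪ {i}` is a basis iff `S ∪ {j}`
is), then the difference `ν(S ∪ {i}) − ν(S ∪ {j})` is a constant `c`, over all `S` avoiding
`i, j` for which `S ∪ {i}` is a basis. -/
theorem stmt_14 {E : Type*} [DecidableEq E] (r : ℕ) (ν : Finset E → WithTop ℝ)
    (hne : ∃ B : Finset E, B.card = r ∧ ν B ≠ ⊤)
    (hexch : ∀ B B' : Finset E, B.card = r → B'.card = r → ∀ x ∈ B \ B',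
      ∃ y ∈ B' \ B, ν (insert y (B.erase x)) + ν (insert x (B'.erase y)) ≤ ν B + ν B')
    (i j : E) (hij : i ≠ j)
    (hdep : ∀ B : Finset E, B.card = r → i ∈ B → j ∈ B → ν B = ⊤)
    (hpar : ∀ S : Finset E, i ∉ S → j ∉ S → S.card + 1 = r →
      (ν (insert i S) ≠ ⊤ ↔ ν (insert j S) ≠ ⊤)) :
    ∃ c : ℝ, ∀ S : Finset E, i ∉ S → j ∉ S → S.card + 1 = r →
      ν (insert i S) ≠ ⊤ → ν (insert i S) = ν (insert j S) + (c : WithTop ℝ) := by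
  have key : ∀ S T : Finset E, i ∉ S → j ∉ S → S.card + 1 = r →
      i ∉ T → j ∉ T → T.card + 1 = r →
      ν (insert i S) ≠ ⊤ → ν (insert i T) ≠ ⊤ →
      ν (insert j S) + ν (insert i T) ≤ ν (insert i S) + ν (insert j T) := by
    intro S T hiS hjS hS hiT hjT hT hfS hfT
    have hfT' : ν (insert j T) ≠ ⊤ := (hpar T hiT hjT hT).mp hfT
    have hc1 : (insert i S).card = r := by rw [card_insert_of_notMem hiS]; exact hS
    have hc2 : (insert j T).card = r := by rw [card_insert_of_notMem hjT]; exact hT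
    have hiB2 : i ∉ insert j T := by simp [hij, hiT]
    have hx : i ∈ insert i S \ insert j T := mem_sdiff.mpr ⟨mem_insert_self _ _, hiB2⟩
    obtain ⟨y, hy, hle⟩ := hexch (insert i S) (insert j T) hc1 hc2 i hx
    rw [mem_sdiff] at hy
    have hyj : y = j := by
      by_contra hyj
      have hyT : y ∈ T := by
        rcases mem_insert.mp hy.1 with h | h
        · exact absurd h hyj
        · exact h
      have hjmem : j ∈ (insert j T).erase y :=
        mem_erase.mpr ⟨fun h => hyj h.symm, mem_insert_self _ _⟩
      have hine : i ∉ (insert j T).erase y := fun h => hiB2 (mem_of_mem_erase h)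
      have hcard : (insert i ((insert j T).erase y)).card = r := by
        rw [card_insert_of_notMem hine, card_erase_of_mem hy.1, hc2]
        omega
      have htop := hdep _ hcard (mem_insert_self _ _) (mem_insert_of_mem hjmem)
      rw [htop, add_top] at hle
      exact absurd (top_le_iff.mp hle) (WithTop.add_ne_top.mpr ⟨hfS, hfT'⟩)
    subst hyj
    rwa [erase_insert hiS, erase_insert hjT] at hle
  by_cases hex : ∃ S0 : Finset E, i ∉ S0 ∧ j ∉ S0 ∧ S0.card + 1 = r ∧ ν (insert i S0) ≠ ⊤
  · obtain ⟨S0, hiS0, hjS0, hS0, hfS0⟩ := hex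
    have hfS0' : ν (insert j S0) ≠ ⊤ := (hpar S0 hiS0 hjS0 hS0).mp hfS0
    obtain ⟨a0, ha0⟩ := WithTop.ne_top_iff_exists.mp hfS0
    obtain ⟨b0, hb0⟩ := WithTop.ne_top_iff_exists.mp hfS0'
    refine ⟨a0 - b0, ?_⟩
    intro S hiS hjS hS hfS
    have hfS' : ν (insert j S) ≠ ⊤ := (hpar S hiS hjS hS).mp hfS
    obtain ⟨a, ha⟩ := WithTop.ne_top_iff_exists.mp hfS
    obtain ⟨b, hb⟩ := WithTop.ne_top_iff_exists.mp hfS'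
    have e1 := key S S0 hiS hjS hS hiS0 hjS0 hS0 hfS hfS0
    have e2 := key S0 S hiS0 hjS0 hS0 hiS hjS hS hfS0 hfS
    rw [← ha, ← hb, ← ha0, ← hb0, ← WithTop.coe_add, ← WithTop.coe_add,
      WithTop.coe_le_coe] at e1 e2
    rw [← ha, ← hb, ← WithTop.coe_add, WithTop.coe_inj]
    linarith
  · refine ⟨0, fun S hiS hjS hS hfS => absurd ⟨S, hiS, hjS, hS, hfS⟩ hex⟩
end

section
/- Let u be an element of a division ring Q such that u, u², …, u^{p³−1} are distinct and u^{p³−1} = 1 (i.e., u is a primitive (p³−1)-th root of unity), where p is a prime. If every element of Q has degree at most 2 over the central subfield ℚ (i.e., satisfies a monic polynomial of degree ≤ 2 with rational coefficients), then p³ − 1 divides an integer N with φ(p³−1) ≤ 2, which is impossible for any prime p; hence no such u exists in Q. -/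
lemma three_le_totient {n : ℕ} (hn : 7 ≤ n) : 3 ≤ n.totient := by
  have key : ∀ k : ℕ, Nat.Coprime n k → 2 ≤ k → k ≤ n - 2 →
      3 ≤ n.totient := by
    intro k hk hk2 hkn
    have hsub : ({1, k, n - 1} : Finset ℕ) ⊆ Finset.filter n.Coprime (Finset.range n) := by
      intro x hx
      simp only [Finset.mem_insert, Finset.mem_singleton] at hx
      rcases hx with rfl | rfl | rfl
      · simp [Finset.mem_filter, Finset.mem_range]; omega
      · simp only [Finset.mem_filter, Finset.mem_range]
        exact ⟨by omega, hk⟩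
      · simp only [Finset.mem_filter, Finset.mem_range]
        refine ⟨by omega, ?_⟩
        have : n = (n - 1) + 1 := by omega
        rw [this]
        simpa using (Nat.coprime_succ_self (n-1))
    have hcard : ({1, k, n - 1} : Finset ℕ).card = 3 := by
      rw [Finset.card_insert_of_notMem, Finset.card_insert_of_notMem] <;>
        simp <;> omega
    calc 3 = ({1, k, n - 1} : Finset ℕ).card := hcard.symm
      _ ≤ (Finset.filter n.Coprime (Finset.range n)).card := Finset.card_le_card hsub
      _ = n.totient := (Nat.totient_eq_card_coprime n).symm
  rcases Nat.even_or_odd n with he | ho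
  · -- even case
    by_cases h4 : n % 4 = 0
    · refine key (n / 2 - 1) ?_ (by omega) (by omega)
      have hd := Nat.gcd_dvd_left n (n / 2 - 1)
      have hd2 := Nat.gcd_dvd_right n (n / 2 - 1)
      have h2 : Nat.gcd n (n / 2 - 1) ∣ 2 := by
        have := Nat.dvd_sub hd (hd2.mul_left 2)
        have heq : n - 2 * (n / 2 - 1) = 2 := by omega
        rwa [heq] at this
      have hodd : ¬ (2 ∣ (n / 2 - 1)) := by omega
      unfold Nat.Coprime
      rcases (Nat.dvd_prime Nat.prime_two).mp h2 with h | h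
      · exact h
      · rw [h] at hd2; exact absurd hd2 hodd
    · obtain ⟨m, hm⟩ := he
      refine key (n / 2 - 2) ?_ (by omega) (by omega)
      have hd := Nat.gcd_dvd_left n (n / 2 - 2)
      have hd2 := Nat.gcd_dvd_right n (n / 2 - 2)
      have h2 : Nat.gcd n (n / 2 - 2) ∣ 4 := by
        have := Nat.dvd_sub hd (hd2.mul_left 2)
        have heq : n - 2 * (n / 2 - 2) = 4 := by omega
        rwa [heq] at this
      have hodd : ¬ (2 ∣ (n / 2 - 2)) := by omega
      unfold Nat.Coprime
      have hg2 : ¬ (2 ∣ Nat.gcd n (n / 2 - 2)) := fun h => hodd (h.trans hd2)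
      have hcop : Nat.Coprime (Nat.gcd n (n / 2 - 2)) 4 := by
        have : Nat.Coprime (Nat.gcd n (n / 2 - 2)) 2 :=
          Nat.coprime_two_right.mpr (Nat.odd_iff.mpr (by omega))
        simpa using this.pow_right 2
      have := Nat.dvd_gcd (dvd_refl _) h2
      rw [hcop] at this
      exact Nat.eq_one_of_dvd_one this
  · refine key 2 ?_ le_rfl (by omega)
    exact Nat.coprime_two_right.mpr ho

/-- In a division ring `Q` of characteristic zero in which every element has degree at most
2 over the central subfield `ℚ`, there is no primitive `(p³ − 1)`-th root of unity `u`
(for `p` prime): the powers `u, u², …, u^{p³−1}` being distinct with `u^{p³−1} = 1` leads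
to a contradiction, since a primitive `(p³−1)`-th root of unity has degree
`φ(p³−1) ≥ 3` over `ℚ`. -/
theorem stmt_15 {Q : Type*} [DivisionRing Q] [CharZero Q]
    (p : ℕ) (hp : p.Prime) (u : Q)
    (hroot : u ^ (p ^ 3 - 1) = 1)
    (hdist : ∀ i j : ℕ, 1 ≤ i → i < j → j ≤ p ^ 3 - 1 → u ^ i ≠ u ^ j)
    (hdeg2 : ∀ x : Q, ∃ b c : ℚ, x ^ 2 + (b : Q) * x + (c : Q) = 0) :
    False := by
  set m := p ^ 3 - 1 with hm
  have hp2 : 2 ≤ p := hp.two_le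
  have hm7 : 7 ≤ m := by
    have : 2 ^ 3 ≤ p ^ 3 := Nat.pow_le_pow_left hp2 3
    omega
  -- the commutative subalgebra generated by u
  set A := Algebra.adjoin ℚ ({u} : Set Q) with hA
  letI : CommRing A := Algebra.adjoinCommRingOfComm ℚ (by
    rintro a rfl b rfl; rfl)
  have hinj : Function.Injective (A.val : A →ₐ[ℚ] Q) := Subtype.val_injective
  haveI : IsDomain A :=
    Function.Injective.isDomain (A.val : A →ₐ[ℚ] Q).toRingHom hinj
  haveI : CharZero A := charZero_of_injective_algebraMap (algebraMap ℚ A).injective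
  set v : A := ⟨u, Algebra.self_mem_adjoin_singleton ℚ u⟩ with hv
  have hvu : (A.val : A →ₐ[ℚ] Q) v = u := rfl
  have hvm : v ^ m = 1 := hinj (by rw [map_pow, map_one, hvu]; exact hroot)
  have horder : orderOf v = m := by
    rw [orderOf_eq_iff (by omega)]
    refine ⟨hvm, fun i him hi hone => ?_⟩
    have h1 : u ^ i = 1 := by
      have := congrArg (A.val : A →ₐ[ℚ] Q) hone
      rwa [map_pow, map_one, hvu] at this
    exact hdist i m hi him le_rfl (by rw [h1, hroot])
  have hprim : IsPrimitiveRoot v m := horder ▸ IsPrimitiveRoot.orderOf v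
  have hint : IsIntegral ℤ v := hprim.isIntegral (by omega)
  have hlow : m.totient ≤ (minpoly ℤ v).natDegree := hprim.totient_le_degree_minpoly
  -- quadratic over ℚ
  obtain ⟨b, c, hbc⟩ := hdeg2 u
  set q : Polynomial ℚ := Polynomial.X ^ 2 + (Polynomial.C b * Polynomial.X
      + Polynomial.C c) with hqdef
  have hqmon : q.Monic := Polynomial.monic_X_pow_add
    (lt_of_le_of_lt Polynomial.degree_linear_le (by norm_num))
  have hqdeg : q.degree ≤ 2 := (Polynomial.degree_add_le _ _).trans
    (max_le (by simp) (Polynomial.degree_linear_le.trans (by norm_num)))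
  have haevu : Polynomial.aeval u q = 0 := by
    rw [hqdef]
    simp only [map_add, map_mul, Polynomial.aeval_X_pow, Polynomial.aeval_C,
      Polynomial.aeval_X]
    rw [show (algebraMap ℚ Q) b = (b : Q) from eq_ratCast _ _,
      show (algebraMap ℚ Q) c = (c : Q) from eq_ratCast _ _, ← add_assoc]
    exact hbc
  have haev : Polynomial.aeval v q = 0 := by
    apply hinj
    rw [map_zero, ← Polynomial.aeval_algHom_apply, hvu]
    exact haevu
  have hdegq : (minpoly ℚ v).natDegree ≤ 2 := by
    have h1 := minpoly.degree_le_of_ne_zero ℚ v hqmon.ne_zero haev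
    exact Polynomial.natDegree_le_iff_degree_le.mpr (h1.trans hqdeg)
  have hZQ : (minpoly ℤ v).natDegree = (minpoly ℚ v).natDegree := by
    rw [minpoly.isIntegrallyClosed_eq_field_fractions' ℚ hint]
    exact (Polynomial.natDegree_map_eq_of_injective
      (fun a b hab => by exact_mod_cast hab) _).symm
  have := three_le_totient hm7
  omega
end

section
/- Let Q be a division ring with surjective discrete valuation v, valuation ring R, residue field L (assumed commutative), and uniformizer π ∈ R with induced automorphism φ of L given by x̄ ↦ (πxπ⁻¹)‾. For a right Q-subspace V ⊆ Qⁿ and α ∈ ℤⁿ, define V_α ⊆ Lⁿ as the reduction of (π^{−α}V) ∩ Rⁿ, where π^{−α} is the diagonal matrix with entries π^{−α₁}, …, π^{−αₙ}. Then V_{α−(1,…,1)} = φ(V_α) for all α ∈ ℤⁿ, where φ is applied coordinatewise. -/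
/-- The member `V_α ⊆ Lⁿ` of the linear flock of a right `Q`-subspace `V ⊆ Qⁿ`:
the coordinatewise residue reduction (via `ρ : Q → L`) of `(π^{-α} V) ∩ Rⁿ`, where
`π^{-α}` acts diagonally by left multiplication and `R = {x | 0 ≤ v x}`. -/
def flockPiece {Q L : Type*} [DivisionRing Q] [Field L]
    (v : Q → WithTop ℤ) (ρ : Q → L) (π : Q) {n : ℕ}
    (V : Submodule Qᵐᵒᵖ (Fin n → Q)) (α : Fin n → ℤ) : Set (Fin n → L) :=
  {y : Fin n → L | ∃ x ∈ V, (∀ i, 0 ≤ v (π ^ (-(α i)) * x i)) ∧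
    y = fun i => ρ (π ^ (-(α i)) * x i)}

/-- Flock axiom (2): `V_{α-(1,…,1)} = φ(V_α)`, where `φ` is the residue automorphism
`x̄ ↦ (π x π⁻¹)‾` of the commutative residue field `L` of a division ring `Q` with a
surjective discrete valuation `v` and uniformizer `π`, applied coordinatewise. -/
theorem stmt_18 {Q L : Type*} [DivisionRing Q] [Field L]
    (v : Q → WithTop ℤ)
    (hmul : ∀ a b : Q, v (a * b) = v a + v b)
    (hadd : ∀ a b : Q, min (v a) (v b) ≤ v (a + b))
    (htop : ∀ x : Q, v x = ⊤ ↔ x = 0)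
    (hsurjv : ∀ m : ℤ, ∃ x : Q, v x = (m : WithTop ℤ))
    (ρ : Q → L)
    (hρ1 : ρ 1 = 1)
    (hρadd : ∀ x y : Q, 0 ≤ v x → 0 ≤ v y → ρ (x + y) = ρ x + ρ y)
    (hρmul : ∀ x y : Q, 0 ≤ v x → 0 ≤ v y → ρ (x * y) = ρ x * ρ y)
    (hρker : ∀ x : Q, 0 ≤ v x → (ρ x = 0 ↔ 0 < v x))
    (hρsurj : ∀ l : L, ∃ x : Q, 0 ≤ v x ∧ ρ x = l)
    (π : Q) (hπ : v π = (1 : ℤ))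
    (φ : L ≃+* L) (hφ : ∀ x : Q, 0 ≤ v x → φ (ρ x) = ρ (π * x * π⁻¹))
    {n : ℕ} (V : Submodule Qᵐᵒᵖ (Fin n → Q)) (α : Fin n → ℤ) :
    flockPiece v ρ π V (fun i => α i - 1) =
      (fun y : Fin n → L => fun i => φ (y i)) '' flockPiece v ρ π V α := by
  have hπ0 : π ≠ 0 := fun h => by
    rw [h, (htop (0:Q)).mpr rfl] at hπ
    simp at hπ
  have h1 : v (1:Q) = 0 := by
    have h := hmul 1 1
    rw [mul_one] at h
    have hne : v (1:Q) ≠ ⊤ := fun ht => one_ne_zero ((htop 1).mp ht)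
    lift v (1:Q) to ℤ using hne with m hm
    have hmm : m = m + m := by exact_mod_cast h
    have : m = 0 := by omega
    simp [this]
  have hπinv : v π⁻¹ = ((-1 : ℤ) : WithTop ℤ) := by
    have h := hmul π π⁻¹
    rw [mul_inv_cancel₀ hπ0, h1, hπ] at h
    have hne : v π⁻¹ ≠ ⊤ := by
      intro ht; rw [ht] at h; simp at h
    lift v π⁻¹ to ℤ using hne with m hm
    have hmm : (0:ℤ) = 1 + m := by exact_mod_cast h
    have : m = -1 := by omega
    simp [this]
  have hsplit : ∀ k : ℤ, π ^ (-(k-1)) = π * π ^ (-k) := by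
    intro k
    have he : -(k-1) = 1 + -k := by ring
    rw [he, zpow_add₀ hπ0, zpow_one]
  have hcancel : ∀ a b : WithTop ℤ,
      ((1:ℤ) : WithTop ℤ) + a + (b + ((-1:ℤ) : WithTop ℤ)) = a + b := by
    intro a b
    have h : ((1:ℤ) : WithTop ℤ) + ((-1:ℤ) : WithTop ℤ) = 0 := by
      rw [← WithTop.coe_add]; norm_num
    calc ((1:ℤ) : WithTop ℤ) + a + (b + ((-1:ℤ) : WithTop ℤ))
        = a + b + (((1:ℤ) : WithTop ℤ) + ((-1:ℤ) : WithTop ℤ)) := by abel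
      _ = a + b := by rw [h, add_zero]
  ext y
  constructor
  · rintro ⟨x, hxV, hval, rfl⟩
    have hx' : ∀ i, (MulOpposite.op π • x) i = x i * π := fun i => rfl
    have hveq : ∀ i, v (π ^ (-(α i)) * ((MulOpposite.op π • x) i))
        = v (π ^ (-(α i - 1)) * x i) := by
      intro i
      rw [hx', hmul, hmul, hsplit, hmul, hmul]
      abel
    refine ⟨fun i => ρ (π ^ (-(α i)) * ((MulOpposite.op π • x) i)), ⟨MulOpposite.op π • x,
      V.smul_mem _ hxV, ?_, rfl⟩, ?_⟩
    · intro i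
      rw [hveq i]
      exact hval i
    · funext i
      change φ (ρ (π ^ (-(α i)) * ((MulOpposite.op π • x) i))) = ρ (π ^ (-(α i - 1)) * x i)
      have hge : 0 ≤ v (π ^ (-(α i)) * ((MulOpposite.op π • x) i)) := by
        rw [hveq i]; exact hval i
      rw [hφ _ hge]
      congr 1
      rw [hx', hsplit]
      calc π * (π ^ (-(α i)) * (x i * π)) * π⁻¹
          = π * π ^ (-(α i)) * x i * (π * π⁻¹) := by simp only [mul_assoc]
        _ = π * π ^ (-(α i)) * x i := by rw [mul_inv_cancel₀ hπ0, mul_one]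
  · rintro ⟨z, ⟨x, hxV, hval, rfl⟩, rfl⟩
    have hx' : ∀ i, (MulOpposite.op π⁻¹ • x) i = x i * π⁻¹ := fun i => rfl
    have hveq : ∀ i, v (π ^ (-(α i - 1)) * ((MulOpposite.op π⁻¹ • x) i))
        = v (π ^ (-(α i)) * x i) := by
      intro i
      rw [hx', hsplit, hmul, hmul, hmul, hπ, hπinv, hcancel, hmul]
    refine ⟨MulOpposite.op π⁻¹ • x, V.smul_mem _ hxV, ?_, ?_⟩
    · intro i
      show 0 ≤ v (π ^ (-(α i - 1)) * ((MulOpposite.op π⁻¹ • x) i))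
      rw [hveq i]
      exact hval i
    · funext i
      change φ (ρ (π ^ (-(α i)) * x i)) = ρ (π ^ (-(α i - 1)) * ((MulOpposite.op π⁻¹ • x) i))
      rw [hφ _ (hval i)]
      congr 1
      rw [hx', hsplit]
      calc π * (π ^ (-(α i)) * x i) * π⁻¹
          = π * π ^ (-(α i)) * (x i * π⁻¹) := by simp only [mul_assoc]
end

section
/- Let Q be a division ring with surjective discrete valuation v, valuation ring R, commutative residue field L, and uniformizer π. Let V ⊆ Qⁿ be a right Q-subspace and define V_α as the reduction of (π^{−α}V) ∩ Rⁿ in Lⁿ for α ∈ ℤⁿ. Then for every α ∈ ℤⁿ and every i ∈ {1,…,n}: V_α ∩ {x : xᵢ = 0} equals the image of V_{α+eᵢ} under the map setting the i-th coordinate to zero, where eᵢ is the i-th standard basis vector. -/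
/-- Flock axiom (1): `V_α / i = V_{α+eᵢ} \ i`, i.e. the intersection of `V_α` with the
hyperplane `{xᵢ = 0}` equals the image of `V_{α+eᵢ}` under setting the `i`-th coordinate
to zero. -/
theorem stmt_19 {Q L : Type*} [DivisionRing Q] [Field L]
    (v : Q → WithTop ℤ)
    (hmul : ∀ a b : Q, v (a * b) = v a + v b)
    (hadd : ∀ a b : Q, min (v a) (v b) ≤ v (a + b))
    (htop : ∀ x : Q, v x = ⊤ ↔ x = 0)
    (hsurjv : ∀ m : ℤ, ∃ x : Q, v x = (m : WithTop ℤ))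
    (ρ : Q → L)
    (hρ1 : ρ 1 = 1)
    (hρadd : ∀ x y : Q, 0 ≤ v x → 0 ≤ v y → ρ (x + y) = ρ x + ρ y)
    (hρmul : ∀ x y : Q, 0 ≤ v x → 0 ≤ v y → ρ (x * y) = ρ x * ρ y)
    (hρker : ∀ x : Q, 0 ≤ v x → (ρ x = 0 ↔ 0 < v x))
    (hρsurj : ∀ l : L, ∃ x : Q, 0 ≤ v x ∧ ρ x = l)
    (π : Q) (hπ : v π = (1 : ℤ))
    {n : ℕ} (V : Submodule Qᵐᵒᵖ (Fin n → Q)) (α : Fin n → ℤ) (i : Fin n) :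
    flockPiece v ρ π V α ∩ {y : Fin n → L | y i = 0} =
      (fun y : Fin n → L => Function.update y i 0) ''
        flockPiece v ρ π V (fun j => α j + (if j = i then 1 else 0)) := by
  have hπ0 : π ≠ 0 := by
    intro h
    have := (htop π).mpr h
    rw [hπ] at this
    exact (WithTop.coe_ne_top this)
  have hv1 : v 1 = 0 := by
    have h := hmul 1 1
    rw [one_mul] at h
    rcases ht : v 1 with _ | a
    · exact absurd ((htop 1).mp (by rw [ht]; rfl)) one_ne_zero
    · rw [ht, WithTop.some_eq_coe, ← WithTop.coe_add, WithTop.coe_eq_coe] at h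
      rw [WithTop.some_eq_coe]
      have : a = 0 := by omega
      simp [this]
  have hvinv : v π⁻¹ = ((-1 : ℤ) : WithTop ℤ) := by
    have h := hmul π⁻¹ π
    rw [inv_mul_cancel₀ hπ0, hv1, hπ] at h
    rcases ht : v π⁻¹ with _ | a
    · rw [ht, WithTop.none_eq_top, top_add] at h; exact absurd h.symm (by simp)
    · rw [ht, WithTop.some_eq_coe, ← WithTop.coe_add] at h
      rw [WithTop.some_eq_coe, WithTop.coe_eq_coe]
      have h' : (0:ℤ) = a + 1 := by exact_mod_cast h
      omega
  have hvπ : 0 ≤ v π := by rw [hπ]; exact_mod_cast (zero_le_one : (0:ℤ) ≤ 1)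
  have hρπ : ρ π = 0 := (hρker π hvπ).mpr
    (by rw [hπ]; exact_mod_cast (zero_lt_one : (0:ℤ) < 1))
  have key1 : ∀ j : Fin n, π ^ (-(α j + 1)) = π⁻¹ * π ^ (-(α j)) := by
    intro j
    rw [show -(α j + 1) = -1 + -(α j) by ring, zpow_add₀ hπ0, zpow_neg_one]
  have key2 : ∀ j : Fin n, π ^ (-(α j)) = π * π ^ (-(α j + 1)) := by
    intro j
    rw [show -(α j) = 1 + -(α j + 1) by ring, zpow_add₀ hπ0, zpow_one]
  ext y
  simp only [Set.mem_inter_iff, Set.mem_image, Set.mem_setOf_eq, flockPiece]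
  constructor
  · rintro ⟨⟨x, hxV, hx0, rfl⟩, hyi⟩
    have hpos : 0 < v (π ^ (-(α i)) * x i) := (hρker _ (hx0 i)).mp hyi
    have hi' : 0 ≤ v (π ^ (-(α i + 1)) * x i) := by
      rw [key1 i, mul_assoc, hmul, hvinv]
      rcases ht : v (π ^ (-(α i)) * x i) with _ | a
      · rw [WithTop.none_eq_top]; simp
      · rw [ht] at hpos
        rw [WithTop.some_eq_coe, ← WithTop.coe_add]
        rw [WithTop.some_eq_coe] at hpos
        have : 0 < a := by exact_mod_cast hpos
        exact_mod_cast (by omega : (0:ℤ) ≤ -1 + a)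
    refine ⟨fun j => ρ (π ^ (-(α j + if j = i then 1 else 0)) * x j),
      ⟨x, hxV, ?_, rfl⟩, ?_⟩
    · intro j
      by_cases hj : j = i
      · subst hj; simpa using hi'
      · simpa [hj] using hx0 j
    · funext j
      by_cases hj : j = i
      · subst hj
        rw [Function.update_self]
        exact hyi.symm
      · rw [Function.update_of_ne hj]
        simp [hj]
  · rintro ⟨y', ⟨x, hxV, hx0, rfl⟩, rfl⟩
    have hii : 0 ≤ v (π ^ (-(α i + 1)) * x i) := by
      have := hx0 i
      simpa using this
    have hx0' : ∀ j, 0 ≤ v (π ^ (-(α j)) * x j) := by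
      intro j
      by_cases hj : j = i
      · subst hj
        rw [key2, mul_assoc, hmul]
        exact add_nonneg hvπ hii
      · simpa [hj] using hx0 j
    have hival : ρ (π ^ (-(α i)) * x i) = 0 := by
      rw [key2, mul_assoc, hρmul π _ hvπ hii, hρπ, zero_mul]
    refine ⟨⟨x, hxV, hx0', ?_⟩, ?_⟩
    · funext j
      by_cases hj : j = i
      · subst hj
        rw [Function.update_self]
        exact hival.symm
      · rw [Function.update_of_ne hj]
        simp [hj]
    · rw [Function.update_self]
end
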